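/- Let k1V, k2, κ, γ > 0. The nested QSSA reduction of the three-species linear system yields the effective slow system ∅ →^{k1} S1 →^{k2/3} ∅, whose invariant distribution is Poisson with intensity λ_QSSA = 3·k1V/k2; i.e. the Poisson pmf q(n) = e^(−λ_QSSA) λ_QSSA^n/n! satisfies (k1V + (k2/3)·n)·q(n) = k1V·q(n−1) + (k2/3)·(n+1)·q(n+1) for all n ∈ ℕ (with q(−1) = 0). Moreover, the true intensity λ_true = (k1V/(k2·γ·κ))·(γ·k2 + 3·γ·κ + 2·k2·κ) of the marginal invariant distribution of S1 = X1 + X2 + X3 satisfies λ_true − λ_QSSA = k1V·(γ + 2κ)/(γ·κ). -/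

import Mathlib

/-- The nested QSSA reduction of the three-species linear system gives the
effective birth–death chain on `S1` with birth rate `k1V` and death rate
`(k2/3)·n`, whose invariant distribution is Poisson with intensity
`λ_QSSA = 3k1V/k2`; moreover the true intensity
`λ_true = (k1V/(k2γκ))(γk2 + 3γκ + 2k2κ)` of the marginal invariant
distribution of `S1` satisfies `λ_true − λ_QSSA = k1V(γ+2κ)/(γκ)`. -/
theorem nested_QSSA_intensity_error
    (k1V k2 kappa gamma : ℝ)
    (h1 : 0 < k1V) (h2 : 0 < k2) (hk : 0 < kappa) (hg : 0 < gamma)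
    (lamQSSA lamTrue : ℝ)
    (hQ : lamQSSA = 3 * k1V / k2)
    (hT : lamTrue = k1V / (k2 * gamma * kappa) *
      (gamma * k2 + 3 * gamma * kappa + 2 * k2 * kappa))
    (q : ℕ → ℝ)
    (hq : ∀ n : ℕ, q n = Real.exp (-lamQSSA) * lamQSSA ^ n / n.factorial) :
    (∀ n : ℕ,
      (k1V + k2 / 3 * n) * q n =
        k1V * (if n = 0 then 0 else q (n - 1)) + k2 / 3 * (n + 1) * q (n + 1)) ∧
    lamTrue - lamQSSA = k1V * (gamma + 2 * kappa) / (gamma * kappa) := by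
  have hlam : k2 / 3 * lamQSSA = k1V := by
    rw [hQ]; field_simp
  constructor
  · intro n
    match n with
    | 0 =>
      simp only [if_pos rfl, hq]
      simp only [Nat.factorial, Nat.cast_one, pow_zero, pow_one, Nat.cast_zero]
      rw [← hlam]
      field_simp
      simp
      ring
    | (m+1) =>
      simp only [if_neg (Nat.succ_ne_zero m), Nat.add_sub_cancel, hq]
      have hf : ((m+1).factorial : ℝ) = (m+1) * m.factorial := by
        push_cast [Nat.factorial_succ]; ring
      have hf2 : ((m+2).factorial : ℝ) = (m+2) * (m+1) * m.factorial := by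
        show ((m+2).factorial : ℝ) = _
        rw [Nat.factorial_succ, Nat.factorial_succ]; push_cast; ring
      have hm0 : (m.factorial : ℝ) ≠ 0 := Nat.cast_ne_zero.2 m.factorial_pos.ne'
      have h1' : (m:ℝ) + 1 ≠ 0 := by positivity
      have h2' : (m:ℝ) + 2 ≠ 0 := by positivity
      rw [hf, hf2]
      push_cast
      rw [← hlam]
      field_simp
      ring
  · rw [hQ, hT]; field_simp; ring
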